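/- Let $\mathbf{z}\in\mathbb{R}^C$ be sorted descendingly, $T > 1$, and $\Delta z = z_1 - z_2$. Then $0 < d(\mathbf{z};T,1) < \frac{(C-1)e^{-\Delta z/T}}{(C-1)e^{-\Delta z/T}+1}$, where $d(\mathbf{z};T,1) = \frac{e^{z_1}}{\sum_j e^{z_j}} - \frac{e^{z_1/T}}{\sum_j e^{z_j/T}}$, and provided not all entries of $\mathbf{z}$ are equal so that the lower bound is strict. -/

import Mathlib

noncomputable def dfun {C : ℕ} (z : Fin C → ℝ) (T : ℝ) (i : Fin C) : ℝ :=
  Real.exp (z i) / (∑ j, Real.exp (z j)) - Real.exp (z i / T) / (∑ j, Real.exp (z j / T))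

theorem stmt_18 {C : ℕ} (hC : 2 ≤ C) (z : Fin C → ℝ)
    (hz : ∀ i j : Fin C, i ≤ j → z j ≤ z i)
    (T : ℝ) (hT : 1 < T) (hne : ∃ i j : Fin C, z i ≠ z j) :
    0 < dfun z T ⟨0, by omega⟩ ∧
      dfun z T ⟨0, by omega⟩ <
        ((C : ℝ) - 1) * Real.exp (-(z ⟨0, by omega⟩ - z ⟨1, by omega⟩) / T) /
          (((C : ℝ) - 1) * Real.exp (-(z ⟨0, by omega⟩ - z ⟨1, by omega⟩) / T) + 1) := by
  have hT0 : (0:ℝ) < T := lt_trans one_pos hT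
  set i0 : Fin C := ⟨0, by omega⟩ with hi0
  set i1 : Fin C := ⟨1, by omega⟩ with hi1
  set A := ∑ j, Real.exp (z j) with hA
  set B := ∑ j, Real.exp (z j / T) with hB
  have hApos : 0 < A := Finset.sum_pos (fun j _ => Real.exp_pos _) ⟨i0, Finset.mem_univ _⟩
  have hBpos : 0 < B := Finset.sum_pos (fun j _ => Real.exp_pos _) ⟨i0, Finset.mem_univ _⟩
  have hd : dfun z T i0 = Real.exp (z i0) / A - Real.exp (z i0 / T) / B := rfl
  have htop : ∀ j : Fin C, z j ≤ z i0 := fun j => hz i0 j (by simp [hi0, Fin.le_def])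
  -- lower bound
  have hlow : Real.exp (z i0 / T) / B < Real.exp (z i0) / A := by
    rw [div_lt_div_iff₀ hBpos hApos]
    have key : ∑ j, Real.exp (z i0 / T + z j) < ∑ j, Real.exp (z i0 + z j / T) := by
      obtain ⟨i, j, hij⟩ := hne
      have hstrict : ∃ k : Fin C, z k < z i0 := by
        rcases eq_or_lt_of_le (htop i) with h1 | h1
        · rcases eq_or_lt_of_le (htop j) with h2 | h2
          · exact absurd (h1.trans h2.symm) hij
          · exact ⟨j, h2⟩
        · exact ⟨i, h1⟩
      obtain ⟨k, hk⟩ := hstrict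
      refine Finset.sum_lt_sum (fun m _ => ?_) ⟨k, Finset.mem_univ _, ?_⟩
      · apply Real.exp_le_exp.2
        have h1 : (z i0 - z m) / T ≤ z i0 - z m :=
          div_le_self (by linarith [htop m]) hT.le
        rw [sub_div] at h1; linarith
      · apply Real.exp_lt_exp.2
        have h1 : (z i0 - z k) / T < z i0 - z k :=
          div_lt_self (by linarith) hT
        rw [sub_div] at h1; linarith
    calc Real.exp (z i0 / T) * A = ∑ j, Real.exp (z i0 / T + z j) := by
          rw [hA, Finset.mul_sum]; simp [Real.exp_add]
      _ < ∑ j, Real.exp (z i0 + z j / T) := key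
      _ = Real.exp (z i0) * B := by
          rw [hB, Finset.mul_sum]; simp [Real.exp_add]
  constructor
  · rw [hd]; linarith
  · -- upper bound
    set M : ℝ := ((C : ℝ) - 1) * Real.exp (-(z i0 - z i1) / T) with hM
    have hC1 : (1:ℝ) ≤ (C:ℝ) - 1 := by
      have : (2:ℝ) ≤ (C:ℝ) := by exact_mod_cast hC
      linarith
    have hMpos : 0 < M := mul_pos (by linarith) (Real.exp_pos _)
    have hA1 : Real.exp (z i0) / A < 1 := by
      rw [div_lt_one hApos, hA]
      exact Finset.single_lt_sum (f := fun j => Real.exp (z j)) (i := i0) (j := i1)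
        (by simp [hi0, hi1, Fin.ext_iff]) (Finset.mem_univ _) (Finset.mem_univ _)
        (Real.exp_pos _) (fun k _ _ => (Real.exp_pos _).le)
    have hsum : B - Real.exp (z i0 / T) ≤ ((C:ℝ) - 1) * Real.exp (z i1 / T) := by
      have hBsplit : B = Real.exp (z i0 / T) +
          ∑ j ∈ Finset.univ.erase i0, Real.exp (z j / T) := by
        rw [hB, ← Finset.add_sum_erase _ _ (Finset.mem_univ i0)]
      have hbound : ∑ j ∈ Finset.univ.erase i0, Real.exp (z j / T) ≤
          ∑ _j ∈ Finset.univ.erase i0, Real.exp (z i1 / T) := by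
        refine Finset.sum_le_sum (fun j hj => ?_)
        have hj0 : j ≠ i0 := Finset.ne_of_mem_erase hj
        have h1j : i1 ≤ j := by
          rw [Fin.le_def]
          have : j.val ≠ 0 := fun h => hj0 (Fin.ext h)
          simp only [hi1]; omega
        have := hz i1 j h1j
        exact Real.exp_le_exp.2 (by gcongr)
      have hcard : ((Finset.univ.erase i0).card : ℝ) = (C:ℝ) - 1 := by
        rw [Finset.card_erase_of_mem (Finset.mem_univ _)]
        simp [Fintype.card_fin]
        rw [Nat.cast_sub (by omega)]
        simp
      rw [Finset.sum_const, nsmul_eq_mul, hcard] at hbound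
      linarith [hBsplit, hbound]
    have hMeq : Real.exp (z i0 / T) * M = ((C:ℝ) - 1) * Real.exp (z i1 / T) := by
      rw [hM, ← mul_assoc, mul_comm (Real.exp (z i0 / T)), mul_assoc, ← Real.exp_add]
      congr 2
      field_simp
      ring
    have hstep : (B - Real.exp (z i0 / T)) / B ≤ M / (M + 1) := by
      rw [div_le_div_iff₀ hBpos (by linarith)]
      nlinarith [hsum, hMeq, Real.exp_pos (z i0 / T)]
    rw [hd]
    have : Real.exp (z i0) / A - Real.exp (z i0 / T) / B <
        (B - Real.exp (z i0 / T)) / B := by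
      rw [sub_div, div_self hBpos.ne']
      linarith
    linarith
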